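/- Let M be an m×n integer matrix, let s_n be an involutive permutation of {1,…,n} and s_m an involutive permutation of {1,…,m} such that M_{s_m(a), s_n(j)} = M_{a,j} for all a, j. Let c ∈ ℝ^m have all entries nonzero, let ε ∈ {1,−1}^m satisfy ε_{s_m(a)} = ε_a for all a, and set c̃_a = ε_a · c_{s_m(a)}. Let k ∈ ℝ and let δ ∈ {0,1}^n satisfy δ_{s_n(j)} = δ_j for all j. Then the following are equivalent. (a) There exists g ∈ ℝ^n with all entries nonzero, with g_{s_n(j)} = g_j and sign(g_j) = (−1)^{δ_j} for all j, such that the vector X ∈ ℝ^m with entries X_a = c_a · c̃_a · ∏_{j=1}^n g_j^{M_{aj}} satisfies Mᵀ X = (k, …, k). (b) There exists X ∈ ℝ^m with X_{s_m(a)} = X_a for all a, such that: (K) Mᵀ X = (k, …, k); (H) every entry of X is nonzero; (L_σ) sign(X_a) · sign(c_a) · sign(c̃_a) = (−1)^{Σ_j M_{aj} δ_j} for every a; (P_σ) for every α ∈ ℝ^m with Mᵀ α = 0 and α_{s_m(a)} = α_a for all a, ∏_a |X_a|^{α_a} = ∏_a |c_a|^{2 α_a}. -/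

import Mathlib

open scoped RealInnerProductSpace

set_option maxHeartbeats 1000000 in
lemma exists_mulVec_eq {m n : ℕ} (A : Matrix (Fin m) (Fin n) ℝ) (b : Fin m → ℝ)
    (h : ∀ α : Fin m → ℝ, (∀ j, ∑ a, A a j * α a = 0) → ∑ a, α a * b a = 0) :
    ∃ t : Fin n → ℝ, ∀ a, ∑ j, A a j * t j = b a := by
  set T := Matrix.toEuclideanLin A with hT
  have hbmem : ((WithLp.equiv 2 (Fin m → ℝ)).symm b) ∈ LinearMap.range T := by
    rw [← Submodule.orthogonal_orthogonal (LinearMap.range T)]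
    intro α hα
    rw [Submodule.mem_orthogonal] at hα
    have h2 : ∀ x : Fin n → ℝ, ∑ a, (A.mulVec x) a * (WithLp.equiv 2 (Fin m → ℝ) α) a = 0 := by
      intro x
      have := hα _ (LinearMap.mem_range_self T ((WithLp.equiv 2 (Fin n → ℝ)).symm x))
      rw [PiLp.inner_apply] at this
      rw [hT, Matrix.toEuclideanLin_apply] at this
      simpa [mul_comm] using this
    set α' : Fin m → ℝ := WithLp.equiv 2 (Fin m → ℝ) α with hα'
    set β : Fin n → ℝ := fun j => ∑ a, A a j * α' a with hβ
    have hβ0 : ∀ j, β j = 0 := by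
      have h3 := h2 β
      have h4 : ∑ a, (A.mulVec β) a * α' a = ∑ j, β j ^ 2 := by
        simp only [Matrix.mulVec, dotProduct, Finset.sum_mul]
        rw [Finset.sum_comm]
        refine Finset.sum_congr rfl fun j _ => ?_
        calc ∑ x, A x j * β j * α' x = (∑ x, A x j * α' x) * β j := by
              rw [Finset.sum_mul]; exact Finset.sum_congr rfl fun x _ => by ring
          _ = β j * β j := mul_comm _ _
          _ = β j ^ 2 := (pow_two _).symm
      rw [h4] at h3
      intro j
      have := (Finset.sum_eq_zero_iff_of_nonneg (fun i _ => sq_nonneg (β i))).mp h3 j (Finset.mem_univ j)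
      exact pow_eq_zero_iff (two_ne_zero) |>.mp this
    have h5 := h α' hβ0
    rw [real_inner_comm, PiLp.inner_apply]
    simpa [mul_comm, hα'] using h5
  obtain ⟨t, ht⟩ := hbmem
  refine ⟨WithLp.equiv 2 (Fin n → ℝ) t, fun a => ?_⟩
  have h6 := congrFun (congrArg (WithLp.equiv 2 (Fin m → ℝ)) ht) a
  rw [hT] at h6
  change (A.mulVec (WithLp.ofLp t)) a = b a at h6
  simpa [Matrix.mulVec, dotProduct] using h6

lemma rsign_mul (x y : ℝ) : Real.sign (x * y) = Real.sign x * Real.sign y := by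
  rcases lt_trichotomy x 0 with hx|hx|hx
  · rcases lt_trichotomy y 0 with hy|hy|hy
    · rw [Real.sign_of_pos (mul_pos_of_neg_of_neg hx hy), Real.sign_of_neg hx,
        Real.sign_of_neg hy]; ring
    · simp [hy, Real.sign_zero]
    · rw [Real.sign_of_neg (mul_neg_of_neg_of_pos hx hy), Real.sign_of_neg hx,
        Real.sign_of_pos hy]; ring
  · simp [hx, Real.sign_zero]
  · rcases lt_trichotomy y 0 with hy|hy|hy
    · rw [Real.sign_of_neg (mul_neg_of_pos_of_neg hx hy), Real.sign_of_pos hx,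
        Real.sign_of_neg hy]; ring
    · simp [hy, Real.sign_zero]
    · rw [Real.sign_of_pos (mul_pos hx hy), Real.sign_of_pos hx, Real.sign_of_pos hy]; ring

lemma rsign_mul_abs (x : ℝ) : Real.sign x * |x| = x := by
  rcases lt_trichotomy x 0 with hx|hx|hx
  · rw [Real.sign_of_neg hx, abs_of_neg hx]; ring
  · simp [hx]
  · rw [Real.sign_of_pos hx, abs_of_pos hx]; ring

lemma rsign_sq {x : ℝ} (hx : x ≠ 0) : Real.sign x * Real.sign x = 1 := by
  rcases Real.sign_apply_eq_of_ne_zero x hx with h|h <;> rw [h] <;> norm_num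

lemma rsign_prod {ι : Type*} (s : Finset ι) (f : ι → ℝ) :
    Real.sign (∏ i ∈ s, f i) = ∏ i ∈ s, Real.sign (f i) := by
  classical
  induction s using Finset.cons_induction with
  | empty => simp [Real.sign_one]
  | cons a s ha ih => rw [Finset.prod_cons, Finset.prod_cons, rsign_mul, ih]

lemma neg_one_zpow_even {p : ℤ} (he : Even p) : ((-1 : ℝ)) ^ p = 1 := by
  rw [← he.zpow_abs (-1 : ℝ)]; norm_num

lemma rsign_zpow {x : ℝ} (hx : x ≠ 0) (p : ℤ) : Real.sign (x ^ p) = Real.sign x ^ p := by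
  rcases hx.lt_or_gt with h|h
  · rw [Real.sign_of_neg h]
    rcases Int.even_or_odd p with he|ho
    · rw [← he.zpow_abs x, Real.sign_of_pos (zpow_pos (abs_pos.mpr hx) p), neg_one_zpow_even he]
    · have : x ^ p = -(|x| ^ p) := by
        rw [← ho.neg_zpow, abs_of_neg h, neg_neg]
      rw [this, Real.sign_neg, Real.sign_of_pos (zpow_pos (abs_pos.mpr hx) p), ho.neg_one_zpow]
  · rw [Real.sign_of_pos (zpow_pos h p), Real.sign_of_pos h, one_zpow]

lemma zpow_sum' {ι : Type*} {x : ℝ} (hx : x ≠ 0) (s : Finset ι) (e : ι → ℤ) :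
    ∏ i ∈ s, x ^ e i = x ^ (∑ i ∈ s, e i) := by
  classical
  induction s using Finset.cons_induction with
  | empty => simp
  | cons a s ha ih => rw [Finset.prod_cons, Finset.sum_cons, ih, zpow_add₀ hx]

lemma exp_zpow (x : ℝ) (p : ℤ) : Real.exp x ^ p = Real.exp (p * x) := by
  rw [← Real.rpow_intCast, Real.rpow_def_of_pos (Real.exp_pos x), Real.log_exp, mul_comm]

lemma prod_abs_rpow {ι : Type*} [Fintype ι] (x w : ι → ℝ) (hx : ∀ a, x a ≠ 0) :
    ∏ a, |x a| ^ w a = Real.exp (∑ a, w a * Real.log (x a)) := by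
  rw [Real.exp_sum]
  refine Finset.prod_congr rfl fun a _ => ?_
  rw [Real.rpow_def_of_pos (abs_pos.mpr (hx a)), Real.log_abs, mul_comm]

/-- Criterion for existence of a σ-diagonal Einstein metric on a nice nilpotent Lie algebra,
in terms of the root matrix `M`, the involutions `sn` (on nodes) and `sm` (on arrows),
structure constants `c`, permuted structure constants `a ↦ ε a * c (sm a)`,
cosmological constant `k` and coefficient signs `δ`. -/
theorem sigma_diagonal_einstein_criterion (m n : ℕ) (M : Matrix (Fin m) (Fin n) ℤ)
    (sn : Fin n → Fin n) (hsn : Function.Involutive sn)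
    (sm : Fin m → Fin m) (hsm : Function.Involutive sm)
    (hM : ∀ a j, M (sm a) (sn j) = M a j)
    (c : Fin m → ℝ) (hc : ∀ a, c a ≠ 0)
    (ε : Fin m → ℝ) (hε : ∀ a, ε a = 1 ∨ ε a = -1) (hεinv : ∀ a, ε (sm a) = ε a)
    (k : ℝ) (δ : Fin n → ℤ) (hδ : ∀ j, δ j = 0 ∨ δ j = 1)
    (hδinv : ∀ j, δ (sn j) = δ j) :
    (∃ g : Fin n → ℝ, (∀ j, g j ≠ 0) ∧ (∀ j, g (sn j) = g j) ∧
        (∀ j, Real.sign (g j) = (-1 : ℝ) ^ δ j) ∧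
        (∀ j', ∑ a, (M a j' : ℝ) *
          (c a * (ε a * c (sm a)) * ∏ j, g j ^ M a j) = k)) ↔
      (∃ X : Fin m → ℝ, (∀ a, X (sm a) = X a) ∧
        (∀ j, ∑ a, (M a j : ℝ) * X a = k) ∧
        (∀ a, X a ≠ 0) ∧
        (∀ a, Real.sign (X a) * Real.sign (c a) * Real.sign (ε a * c (sm a)) =
          (-1 : ℝ) ^ (∑ j, M a j * δ j)) ∧
        (∀ α : Fin m → ℝ, (∀ j, ∑ a, (M a j : ℝ) * α a = 0) →
          (∀ a, α (sm a) = α a) →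
          ∏ a, |X a| ^ α a = ∏ a, |c a| ^ (2 * α a))) := by
  have hεne : ∀ a, ε a ≠ 0 := fun a => by rcases hε a with h|h <;> rw [h] <;> norm_num
  have hct : ∀ a, ε a * c (sm a) ≠ 0 := fun a => mul_ne_zero (hεne a) (hc (sm a))
  have hcc : ∀ a, c (sm a) * (ε (sm a) * c (sm (sm a))) = c a * (ε a * c (sm a)) := by
    intro a; rw [hsm a, hεinv a]; ring
  have hlogct : ∀ a, Real.log (ε a * c (sm a)) = Real.log (c (sm a)) := by
    intro a; rcases hε a with h|h <;> rw [h]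
    · rw [one_mul]
    · rw [neg_one_mul, Real.log_neg_eq_log]
  have hMs : ∀ a j, M a (sn j) = M (sm a) j := by
    intro a j; rw [← hM (sm a) j, hsm a]
  have hexp : ∀ x : ℝ, x ≠ 0 → Real.exp (Real.log x) = |x| := fun x hx => by
    rw [← Real.log_abs, Real.exp_log (abs_pos.mpr hx)]
  constructor
  · rintro ⟨g, hg0, hgs, hgsign, hK⟩
    have hprodne : ∀ a, (∏ j, g j ^ M a j) ≠ 0 :=
      fun a => Finset.prod_ne_zero_iff.mpr fun j _ => zpow_ne_zero _ (hg0 j)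
    have hX0 : ∀ a, c a * (ε a * c (sm a)) * ∏ j, g j ^ M a j ≠ 0 :=
      fun a => mul_ne_zero (mul_ne_zero (hc a) (hct a)) (hprodne a)
    refine ⟨fun a => c a * (ε a * c (sm a)) * ∏ j, g j ^ M a j, ?_, hK, hX0, ?_, ?_⟩
    · -- symmetry
      intro a
      show c (sm a) * (ε (sm a) * c (sm (sm a))) * ∏ j, g j ^ M (sm a) j
          = c a * (ε a * c (sm a)) * ∏ j, g j ^ M a j
      rw [hcc a]
      congr 1
      have e : ∏ j, g (sn j) ^ M (sm a) (sn j) = ∏ j, g j ^ M (sm a) j :=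
        Fintype.prod_bijective sn hsn.bijective _ _ (fun j => rfl)
      rw [← e]
      exact Finset.prod_congr rfl fun j _ => by rw [hgs j, hM a j]
    · -- L_σ
      intro a
      have hsX : Real.sign (c a * (ε a * c (sm a)) * ∏ j, g j ^ M a j)
          = Real.sign (c a) * Real.sign (ε a * c (sm a))
            * (-1 : ℝ) ^ (∑ j, M a j * δ j) := by
        rw [rsign_mul, rsign_mul]
        congr 1
        rw [rsign_prod]
        calc ∏ j, Real.sign (g j ^ M a j) = ∏ j, ((-1 : ℝ)) ^ (δ j * M a j) := by
              refine Finset.prod_congr rfl fun j _ => ?_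
              rw [rsign_zpow (hg0 j), hgsign j, ← zpow_mul]
          _ = (-1 : ℝ) ^ (∑ j, δ j * M a j) := zpow_sum' (by norm_num) _ _
          _ = (-1 : ℝ) ^ (∑ j, M a j * δ j) := by
              congr 1; exact Finset.sum_congr rfl fun j _ => mul_comm _ _
      rw [hsX]
      calc Real.sign (c a) * Real.sign (ε a * c (sm a)) * (-1 : ℝ) ^ (∑ j, M a j * δ j)
            * Real.sign (c a) * Real.sign (ε a * c (sm a))
          = (Real.sign (c a) * Real.sign (c a))
            * (Real.sign (ε a * c (sm a)) * Real.sign (ε a * c (sm a)))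
            * (-1 : ℝ) ^ (∑ j, M a j * δ j) := by ring
        _ = (-1 : ℝ) ^ (∑ j, M a j * δ j) := by
            rw [rsign_sq (hc a), rsign_sq (hct a), one_mul, one_mul]
    · -- P_σ
      intro α hαK hαs
      rw [prod_abs_rpow _ _ hX0, prod_abs_rpow c (fun a => 2 * α a) hc]
      congr 1
      have hlogX : ∀ a, Real.log (c a * (ε a * c (sm a)) * ∏ j, g j ^ M a j)
          = Real.log (c a) + Real.log (c (sm a)) + ∑ j, (M a j : ℝ) * Real.log (g j) := by
        intro a
        rw [Real.log_mul (mul_ne_zero (hc a) (hct a)) (hprodne a),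
          Real.log_mul (hc a) (hct a), hlogct a,
          Real.log_prod (fun j _ => zpow_ne_zero _ (hg0 j))]
        simp only [Real.log_zpow]
      have h3 : ∑ a, α a * ∑ j, (M a j : ℝ) * Real.log (g j) = 0 := by
        calc ∑ a, α a * ∑ j, (M a j : ℝ) * Real.log (g j)
            = ∑ j, (∑ a, (M a j : ℝ) * α a) * Real.log (g j) := by
              simp only [Finset.mul_sum, Finset.sum_mul]
              rw [Finset.sum_comm]
              exact Finset.sum_congr rfl fun j _ => Finset.sum_congr rfl fun a _ => by ring
          _ = 0 := Finset.sum_eq_zero fun j _ => by rw [hαK j, zero_mul]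
      have h2 : ∑ a, α a * Real.log (c (sm a)) = ∑ a, α a * Real.log (c a) :=
        Fintype.sum_bijective sm hsm.bijective _ _ (fun a => by rw [hαs a])
      calc ∑ a, α a * Real.log (c a * (ε a * c (sm a)) * ∏ j, g j ^ M a j)
          = ∑ a, (α a * Real.log (c a) + α a * Real.log (c (sm a))
              + α a * ∑ j, (M a j : ℝ) * Real.log (g j)) :=
            Finset.sum_congr rfl fun a _ => by rw [hlogX a]; ring
        _ = ∑ a, α a * Real.log (c a) + ∑ a, α a * Real.log (c (sm a))
              + ∑ a, α a * ∑ j, (M a j : ℝ) * Real.log (g j) := by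
            rw [Finset.sum_add_distrib, Finset.sum_add_distrib]
        _ = ∑ a, 2 * α a * Real.log (c a) := by
            rw [h2, h3, add_zero, ← Finset.sum_add_distrib]
            exact Finset.sum_congr rfl fun a _ => by ring
  · rintro ⟨X, hXs, hXK, hX0, hXL, hXP⟩
    set b : Fin m → ℝ :=
      fun a => Real.log (X a) - Real.log (c a) - Real.log (c (sm a)) with hb
    have hbs : ∀ a, b (sm a) = b a := by
      intro a; simp only [hb]; rw [hXs a, hsm a]; ring
    have hb' : ∀ a, b a = Real.log (X a / (c a * (ε a * c (sm a)))) := by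
      intro a
      rw [Real.log_div (hX0 a) (mul_ne_zero (hc a) (hct a)),
        Real.log_mul (hc a) (hct a), hlogct a, hb]
      ring
    obtain ⟨t, ht⟩ := exists_mulVec_eq (fun a j => (M a j : ℝ)) b (by
      intro α hα
      set α' : Fin m → ℝ := fun a => (α a + α (sm a)) / 2 with hα'
      have hα's : ∀ a, α' (sm a) = α' a := fun a => by simp only [hα']; rw [hsm a]; ring
      have hα'K : ∀ j, ∑ a, (M a j : ℝ) * α' a = 0 := by
        intro j
        have e1 : ∑ a, (M a j : ℝ) * α (sm a) = ∑ a, (M a (sn j) : ℝ) * α a :=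
          Fintype.sum_bijective sm hsm.bijective _ _
            (fun a => by rw [hM a j])
        calc ∑ a, (M a j : ℝ) * α' a
            = (∑ a, (M a j : ℝ) * α a + ∑ a, (M a j : ℝ) * α (sm a)) / 2 := by
              rw [← Finset.sum_add_distrib, Finset.sum_div]
              exact Finset.sum_congr rfl fun a _ => by simp only [hα']; ring
          _ = 0 := by rw [hα j, e1, hα (sn j)]; norm_num
      have hP := hXP α' hα'K hα's
      rw [prod_abs_rpow X α' hX0, prod_abs_rpow c (fun a => 2 * α' a) hc] at hP
      have hPlog : ∑ a, α' a * Real.log (X a) = ∑ a, 2 * α' a * Real.log (c a) :=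
        Real.exp_injective hP
      have e3 : ∑ a, α (sm a) * b a = ∑ a, α a * b a :=
        Fintype.sum_bijective sm hsm.bijective _ _ (fun x => by rw [hbs x])
      have e2 : ∑ a, α a * b a = ∑ a, α' a * b a := by
        calc ∑ a, α a * b a = (∑ a, α a * b a + ∑ a, α (sm a) * b a) / 2 := by
              rw [e3]; ring
          _ = ∑ a, α' a * b a := by
              rw [← Finset.sum_add_distrib, Finset.sum_div]
              exact Finset.sum_congr rfl fun a _ => by simp only [hα']; ring
      have e4 : ∑ a, α' a * Real.log (c (sm a)) = ∑ a, α' a * Real.log (c a) :=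
        Fintype.sum_bijective sm hsm.bijective _ _ (fun a => by rw [hα's a])
      rw [e2]
      calc ∑ a, α' a * b a
          = ∑ a, α' a * Real.log (X a) - ∑ a, α' a * Real.log (c a)
            - ∑ a, α' a * Real.log (c (sm a)) := by
            rw [← Finset.sum_sub_distrib, ← Finset.sum_sub_distrib]
            exact Finset.sum_congr rfl fun a _ => by simp only [hb]; ring
        _ = 0 := by
            rw [e4, hPlog, ← Finset.sum_sub_distrib, ← Finset.sum_sub_distrib]
            exact Finset.sum_eq_zero fun a _ => by ring)
    set t' : Fin n → ℝ := fun j => (t j + t (sn j)) / 2 with ht'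
    have ht's : ∀ j, t' (sn j) = t' j := fun j => by simp only [ht']; rw [hsn j]; ring
    have hMt' : ∀ a, ∑ j, (M a j : ℝ) * t' j = b a := by
      intro a
      have e5 : ∑ j, (M a j : ℝ) * t (sn j) = ∑ j, (M a (sn j) : ℝ) * t j :=
        Fintype.sum_bijective sn hsn.bijective _ _
          (fun j => by rw [hsn j])
      have e6 : ∑ j, (M a (sn j) : ℝ) * t j = b a := by
        have h7 := ht (sm a)
        rw [hbs a] at h7
        rw [← h7]
        exact Finset.sum_congr rfl fun j _ => by rw [hMs a j]
      calc ∑ j, (M a j : ℝ) * t' j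
          = (∑ j, (M a j : ℝ) * t j + ∑ j, (M a j : ℝ) * t (sn j)) / 2 := by
            rw [← Finset.sum_add_distrib, Finset.sum_div]
            exact Finset.sum_congr rfl fun j _ => by simp only [ht']; ring
        _ = b a := by rw [ht a, e5, e6]; ring
    have hprod : ∀ a, c a * (ε a * c (sm a))
        * ∏ j, ((-1 : ℝ) ^ δ j * Real.exp (t' j)) ^ M a j = X a := by
      intro a
      have p1 : ∏ j, ((-1 : ℝ) ^ δ j * Real.exp (t' j)) ^ M a j
          = (∏ j, ((-1 : ℝ) ^ δ j) ^ M a j) * ∏ j, Real.exp (t' j) ^ M a j := by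
        rw [← Finset.prod_mul_distrib]
        exact Finset.prod_congr rfl fun j _ => mul_zpow _ _ _
      have p2 : ∏ j, ((-1 : ℝ) ^ δ j) ^ M a j = (-1 : ℝ) ^ (∑ j, M a j * δ j) := by
        calc ∏ j, ((-1 : ℝ) ^ δ j) ^ M a j = ∏ j, ((-1 : ℝ)) ^ (δ j * M a j) :=
              Finset.prod_congr rfl fun j _ => by rw [← zpow_mul]
          _ = (-1 : ℝ) ^ (∑ j, δ j * M a j) := zpow_sum' (by norm_num) _ _
          _ = (-1 : ℝ) ^ (∑ j, M a j * δ j) := by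
              congr 1; exact Finset.sum_congr rfl fun j _ => mul_comm _ _
      have p3 : ∏ j, Real.exp (t' j) ^ M a j = |X a / (c a * (ε a * c (sm a)))| := by
        calc ∏ j, Real.exp (t' j) ^ M a j = ∏ j, Real.exp ((M a j : ℝ) * t' j) :=
              Finset.prod_congr rfl fun j _ => exp_zpow _ _
          _ = Real.exp (∑ j, (M a j : ℝ) * t' j) := (Real.exp_sum _ _).symm
          _ = |X a / (c a * (ε a * c (sm a)))| := by
              rw [hMt' a, hb' a,
                hexp _ (div_ne_zero (hX0 a) (mul_ne_zero (hc a) (hct a)))]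
      have hsY : Real.sign (X a / (c a * (ε a * c (sm a))))
          = (-1 : ℝ) ^ (∑ j, M a j * δ j) := by
        rw [div_eq_mul_inv, rsign_mul, Real.sign_inv, rsign_mul, ← mul_assoc]
        exact hXL a
      rw [p1, p2, p3, ← hsY, rsign_mul_abs, mul_comm,
        div_mul_cancel₀ _ (mul_ne_zero (hc a) (hct a))]
    refine ⟨fun j => (-1 : ℝ) ^ δ j * Real.exp (t' j), ?_, ?_, ?_, ?_⟩
    · exact fun j => mul_ne_zero (zpow_ne_zero _ (by norm_num)) (Real.exp_ne_zero _)
    · intro j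
      show (-1 : ℝ) ^ δ (sn j) * Real.exp (t' (sn j)) = (-1 : ℝ) ^ δ j * Real.exp (t' j)
      rw [hδinv j, ht's j]
    · intro j
      show Real.sign ((-1 : ℝ) ^ δ j * Real.exp (t' j)) = (-1 : ℝ) ^ δ j
      rcases hδ j with h|h <;> rw [h]
      · rw [zpow_zero, one_mul, Real.sign_of_pos (Real.exp_pos _)]
      · rw [zpow_one, neg_one_mul, Real.sign_neg, Real.sign_of_pos (Real.exp_pos _)]
    · intro j'
      rw [← hXK j']
      exact Finset.sum_congr rfl fun a _ => by rw [hprod a]
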